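/- Let C be a model category such that the canonical model structure on sC exists. Then a map between fibrant objects of sC is a weak equivalence in the canonical model structure if and only if it is a level weak equivalence. -/

import Mathlib

open CategoryTheory Limits Simplicial Opposite

universe v u

/-- A retract of a morphism `g` in the arrow category. -/
def IsRetractOf {C : Type u} [Category.{v} C] {X Y Z W : C}
    (f : X ⟶ Y) (g : Z ⟶ W) : Prop :=
  ∃ (i : X ⟶ Z) (r : Z ⟶ X) (j : Y ⟶ W) (s : W ⟶ Y),
    i ≫ r = 𝟙 X ∧ j ≫ s = 𝟙 Y ∧ i ≫ g = f ≫ j ∧ g ≫ s = r ≫ f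

/-- A (Quillen) model structure on a category `C`: three classes of morphisms,
weak equivalences, cofibrations and fibrations, satisfying the two-out-of-three
axiom, closure under retracts, the lifting axioms and the factorization axioms. -/
structure ModelStructure (C : Type u) [Category.{v} C] where
  W : MorphismProperty C
  Cof : MorphismProperty C
  Fib : MorphismProperty C
  w_of_isos : ∀ {X Y : C} (f : X ⟶ Y), IsIso f → W f
  w_comp : ∀ {X Y Z : C} (f : X ⟶ Y) (g : Y ⟶ Z), W f → W g → W (f ≫ g)
  w_cancel_left : ∀ {X Y Z : C} (f : X ⟶ Y) (g : Y ⟶ Z), W f → W (f ≫ g) → W g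
  w_cancel_right : ∀ {X Y Z : C} (f : X ⟶ Y) (g : Y ⟶ Z), W g → W (f ≫ g) → W f
  w_retract : ∀ {X Y Z W' : C} (f : X ⟶ Y) (g : Z ⟶ W'), IsRetractOf f g → W g → W f
  cof_retract : ∀ {X Y Z W' : C} (f : X ⟶ Y) (g : Z ⟶ W'), IsRetractOf f g → Cof g → Cof f
  fib_retract : ∀ {X Y Z W' : C} (f : X ⟶ Y) (g : Z ⟶ W'), IsRetractOf f g → Fib g → Fib f
  lift_triv_cof : ∀ {A B X Y : C} (i : A ⟶ B) (p : X ⟶ Y),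
    Cof i → W i → Fib p → HasLiftingProperty i p
  lift_triv_fib : ∀ {A B X Y : C} (i : A ⟶ B) (p : X ⟶ Y),
    Cof i → Fib p → W p → HasLiftingProperty i p
  fact_cof_trivFib : ∀ {X Y : C} (f : X ⟶ Y),
    ∃ (Z : C) (i : X ⟶ Z) (p : Z ⟶ Y), Cof i ∧ Fib p ∧ W p ∧ i ≫ p = f
  fact_trivCof_fib : ∀ {X Y : C} (f : X ⟶ Y),
    ∃ (Z : C) (i : X ⟶ Z) (p : Z ⟶ Y), Cof i ∧ W i ∧ Fib p ∧ i ≫ p = f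

namespace ModelStructure

variable {C : Type u} [Category.{v} C] (M : ModelStructure C)

/-- An object is cofibrant if the map from the initial object is a cofibration. -/
def Cofibrant [HasInitial C] (A : C) : Prop := M.Cof (initial.to A)

/-- An object is fibrant if the map to the terminal object is a fibration. -/
def Fibrant [HasTerminal C] (X : C) : Prop := M.Fib (terminal.from X)

/-- Left properness: the pushout of a weak equivalence along a cofibration is a
weak equivalence. -/
def LeftProper : Prop :=
  ∀ ⦃Z X Y P : C⦄ (f : Z ⟶ X) (g : Z ⟶ Y) (h : X ⟶ P) (k : Y ⟶ P),
    IsPushout f g h k → M.W f → M.Cof g → M.W k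

/-- Right properness: the pullback of a weak equivalence along a fibration is a
weak equivalence. -/
def RightProper : Prop :=
  ∀ ⦃P X Y Z : C⦄ (h : P ⟶ X) (k : P ⟶ Y) (f : X ⟶ Z) (g : Y ⟶ Z),
    IsPullback h k f g → M.W f → M.Fib g → M.W h

end ModelStructure
section Core1
open CategoryTheory Limits Simplicial Opposite

variable (C : Type u) [Category.{v} C]

/-- The constant simplicial object functor `c : C ⥤ sC`. -/
abbrev constSimp : C ⥤ SimplicialObject C := Functor.const _

/-- Evaluation at simplicial degree zero, `Ev : sC ⥤ C`. -/
abbrev ev0 : SimplicialObject C ⥤ C := (evaluation _ _).obj (op (⦋0⦌ : SimplexCategory))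

variable {C}

/-- The class of level weak equivalences in `sC` relative to a model structure on `C`. -/
def levelWE (M : ModelStructure C) : MorphismProperty (SimplicialObject C) :=
  fun _ _ f => ∀ Δ : SimplexCategoryᵒᵖ, M.W (f.app Δ)

/-- An object of `sC` is homotopically constant if all its simplicial face and
degeneracy operators are weak equivalences in `C`. -/
def HomotopicallyConstant (M : ModelStructure C) (X : SimplicialObject C) : Prop :=
  (∀ (n : ℕ) (i : Fin (n + 2)), M.W (X.δ i)) ∧ ∀ (n : ℕ) (i : Fin (n + 1)), M.W (X.σ i)

end Core1

section Matching
open CategoryTheory Limits Simplicial Opposite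

variable {C : Type u} [Category.{v} C] [HasLimitsOfSize.{0,0} C] [HasColimitsOfSize.{0,0} C]

/-- The matching category of `[n]`: surjections `[n] → [j]` in `Δᵒᵖ` (i.e. maps
`op [n] ⟶ op [j]` that are epimorphisms in `Δᵒᵖ`) with `j < n`. -/
def MatchingCat (n : ℕ) : Type :=
  ObjectProperty.FullSubcategory (fun u : Under (op (⦋n⦌ : SimplexCategory)) =>
    u.right.unop.len < n ∧ Epi u.hom)

instance (n : ℕ) : Category (MatchingCat n) := by
  dsimp [MatchingCat]; infer_instance

/-- The diagram over the matching category associated to a simplicial object. -/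
def matchingDiagram (n : ℕ) (X : SimplicialObject C) : MatchingCat n ⥤ C :=
  ObjectProperty.ι _ ⋙ Under.forget _ ⋙ X

/-- The `n`-th matching object `M_n X` of a simplicial object `X`. -/
noncomputable def matchingObject (n : ℕ) (X : SimplicialObject C) : C :=
  limit (matchingDiagram n X)

/-- The canonical map `X_n ⟶ M_n X`. -/
noncomputable def matchingMap (n : ℕ) (X : SimplicialObject C) :
    X.obj (op ⦋n⦌) ⟶ matchingObject n X :=
  limit.lift (matchingDiagram n X)
    { pt := X.obj (op ⦋n⦌)
      π :=
        { app := fun u => X.map u.obj.hom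
          naturality := fun u v m => by
            show 𝟙 _ ≫ X.map v.obj.hom = X.map u.obj.hom ≫ X.map m.hom.right
            rw [Category.id_comp, ← X.map_comp]
            exact congrArg X.map (Under.w m.hom).symm } }

/-- The map `M_n X ⟶ M_n Y` induced by a map `f : X ⟶ Y` in `sC`. -/
noncomputable def matchingObjMap (n : ℕ) {X Y : SimplicialObject C} (f : X ⟶ Y) :
    matchingObject n X ⟶ matchingObject n Y :=
  limMap (Functor.whiskerLeft (ObjectProperty.ι _ ⋙ Under.forget _) f)

lemma matching_comm (n : ℕ) {X Y : SimplicialObject C} (f : X ⟶ Y) :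
    f.app (op ⦋n⦌) ≫ matchingMap n Y = matchingMap n X ≫ matchingObjMap n f := by
  apply limit.hom_ext
  intro u
  simp only [matchingMap, matchingObjMap]
  erw [Category.assoc, Category.assoc, limit.lift_π, limMap_π, limit.lift_π_assoc]
  exact (f.naturality _).symm

/-- The relative matching map `X_n ⟶ Y_n ×_{M_n Y} M_n X` of a map `f : X ⟶ Y`. -/
noncomputable def relMatchingMap (n : ℕ) {X Y : SimplicialObject C} (f : X ⟶ Y) :
    X.obj (op ⦋n⦌) ⟶ pullback (matchingMap n Y) (matchingObjMap n f) :=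
  pullback.lift (f.app (op ⦋n⦌)) (matchingMap n X) (matching_comm n f)

/-- A map in `sC` is a Reedy fibration if all its relative matching maps are
fibrations in `C`. -/
def ReedyFibration (M : ModelStructure C) {X Y : SimplicialObject C} (f : X ⟶ Y) : Prop :=
  ∀ n : ℕ, M.Fib (relMatchingMap n f)

/-- An object `X` of `sC` is Reedy fibrant if all its matching maps `X_n ⟶ M_n X`
are fibrations in `C`. -/
def ReedyFibrantObj (M : ModelStructure C) (X : SimplicialObject C) : Prop :=
  ∀ n : ℕ, M.Fib (matchingMap n X)

end Matching

section Latching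
open CategoryTheory Limits Simplicial Opposite

variable {C : Type u} [Category.{v} C] [HasLimitsOfSize.{0,0} C] [HasColimitsOfSize.{0,0} C]

/-- The latching category of `[n]`: injections `[j] → [n]` in `Δᵒᵖ` (i.e. maps
`op [j] ⟶ op [n]` that are monomorphisms in `Δᵒᵖ`) with `j < n`. -/
def LatchingCat (n : ℕ) : Type :=
  ObjectProperty.FullSubcategory (fun u : Over (op (⦋n⦌ : SimplexCategory)) =>
    u.left.unop.len < n ∧ Mono u.hom)

instance (n : ℕ) : Category (LatchingCat n) := by
  dsimp [LatchingCat]; infer_instance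

/-- The diagram over the latching category associated to a simplicial object. -/
def latchingDiagram (n : ℕ) (X : SimplicialObject C) : LatchingCat n ⥤ C :=
  ObjectProperty.ι _ ⋙ Over.forget _ ⋙ X

/-- The `n`-th latching object `L_n X` of a simplicial object `X`. -/
noncomputable def latchingObject (n : ℕ) (X : SimplicialObject C) : C :=
  colimit (latchingDiagram n X)

/-- The canonical map `L_n X ⟶ X_n`. -/
noncomputable def latchingMap (n : ℕ) (X : SimplicialObject C) :
    latchingObject n X ⟶ X.obj (op ⦋n⦌) :=
  colimit.desc (latchingDiagram n X)
    { pt := X.obj (op ⦋n⦌)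
      ι :=
        { app := fun u => X.map u.obj.hom
          naturality := fun u v m => by
            show X.map m.hom.left ≫ X.map v.obj.hom = X.map u.obj.hom ≫ 𝟙 _
            rw [Category.comp_id, ← X.map_comp]
            exact congrArg X.map (Over.w m.hom) } }

/-- The map `L_n X ⟶ L_n Y` induced by a map `f : X ⟶ Y` in `sC`. -/
noncomputable def latchingObjMap (n : ℕ) {X Y : SimplicialObject C} (f : X ⟶ Y) :
    latchingObject n X ⟶ latchingObject n Y :=
  colimMap (Functor.whiskerLeft (ObjectProperty.ι _ ⋙ Over.forget _) f)

lemma latching_comm (n : ℕ) {X Y : SimplicialObject C} (f : X ⟶ Y) :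
    latchingObjMap n f ≫ latchingMap n Y = latchingMap n X ≫ f.app (op ⦋n⦌) := by
  apply colimit.hom_ext
  intro u
  simp only [latchingMap, latchingObjMap]
  erw [ι_colimMap_assoc, colimit.ι_desc, colimit.ι_desc_assoc]
  exact (f.naturality u.obj.hom).symm

/-- The relative latching map `X_n ⊔_{L_n X} L_n Y ⟶ Y_n` of a map `f : X ⟶ Y`. -/
noncomputable def relLatchingMap (n : ℕ) {X Y : SimplicialObject C} (f : X ⟶ Y) :
    pushout (latchingMap n X) (latchingObjMap n f) ⟶ Y.obj (op ⦋n⦌) :=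
  pushout.desc (f.app (op ⦋n⦌)) (latchingMap n Y) (latching_comm n f).symm

/-- A map in `sC` is a Reedy cofibration if all its relative latching maps are
cofibrations in `C`. -/
def ReedyCofibration (M : ModelStructure C) {X Y : SimplicialObject C} (f : X ⟶ Y) : Prop :=
  ∀ n : ℕ, M.Cof (relLatchingMap n f)

end Latching
section Instances
open CategoryTheory Limits

instance simplicialObjectHasLimits {C : Type u} [Category.{v} C]
    [HasLimitsOfSize.{0,0} C] : HasLimitsOfSize.{0,0} (SimplicialObject C) := by
  dsimp [SimplicialObject]; infer_instance

instance simplicialObjectHasColimits {C : Type u} [Category.{v} C]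
    [HasColimitsOfSize.{0,0} C] : HasColimitsOfSize.{0,0} (SimplicialObject C) := by
  dsimp [SimplicialObject]; infer_instance

end Instances
section Equifibered
open CategoryTheory Limits Simplicial Opposite

variable {C : Type u} [Category.{v} C] [HasLimitsOfSize.{0,0} C] [HasColimitsOfSize.{0,0} C]

/-- The map `X_{m+1} ⟶ X_m ×_{Y_m} Y_{m+1}` induced by the face operator `d_i`
and a map `f : X ⟶ Y` in `sC`. -/
noncomputable def equifiberedMap {X Y : SimplicialObject C} (f : X ⟶ Y)
    (m : ℕ) (i : Fin (m + 2)) :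
    X.obj (op ⦋m + 1⦌) ⟶ pullback (f.app (op ⦋m⦌)) (Y.δ i) :=
  pullback.lift (X.δ i) (f.app (op ⦋m + 1⦌)) (f.naturality (SimplexCategory.δ i).op)

/-- A Reedy fibration `f : X ⟶ Y` is equifibered if all the maps
`X_{m+1} ⟶ X_m ×_{Y_m} Y_{m+1}` induced by face operators are weak equivalences. -/
def EquifiberedReedyFibration (M : ModelStructure C) {X Y : SimplicialObject C}
    (f : X ⟶ Y) : Prop :=
  ReedyFibration M f ∧ ∀ (m : ℕ) (i : Fin (m + 2)), M.W (equifiberedMap f m i)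

end Equifibered

section Realization
open CategoryTheory Limits Simplicial Opposite

variable {C : Type u} [Category.{v} C]

/-- The hom-sets `[A, B]^{HR}` in the homotopy category of the Reedy model
structure on `sC`, realized as the localization of `sC` at the level weak
equivalences. -/
noncomputable abbrev reedyHo (M : ModelStructure C) :
    SimplicialObject C ⥤ (levelWE M).Localization :=
  (levelWE M).Q

/-- A map `f` in `sC` is a realization weak equivalence if for every `Z` in `C`
it induces a bijection `[B, cZ]^{HR} → [A, cZ]^{HR}` on homotopy classes of maps
into constant objects in the Reedy homotopy category. -/
def RealizationWE (M : ModelStructure C) {A B : SimplicialObject C} (f : A ⟶ B) : Prop :=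
  ∀ Z : C, Function.Bijective
    (fun g : (reedyHo M).obj B ⟶ (reedyHo M).obj ((constSimp C).obj Z) =>
      (reedyHo M).map f ≫ g)

variable [HasLimitsOfSize.{0,0} C] [HasColimitsOfSize.{0,0} C]

/-- The Realization Axiom: every equifibered Reedy fibration which is a
realization weak equivalence is a level weak equivalence. -/
def RealizationAxiom (M : ModelStructure C) : Prop :=
  ∀ ⦃X Y : SimplicialObject C⦄ (f : X ⟶ Y),
    EquifiberedReedyFibration M f → RealizationWE M f → levelWE M f

end Realization

section Canonical
open CategoryTheory Limits Simplicial Opposite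

variable {C : Type u} [Category.{v} C] [HasLimitsOfSize.{0,0} C] [HasColimitsOfSize.{0,0} C]

/-- A model structure `N` on `sC` is the canonical one (relative to a model
structure `M` on `C`) if every level weak equivalence is a weak equivalence, the
cofibrations are exactly the Reedy cofibrations, and the fibrant objects are
exactly the homotopically constant Reedy fibrant objects. -/
def IsCanonical [HasTerminal (SimplicialObject C)] (M : ModelStructure C)
    (N : ModelStructure (SimplicialObject C)) : Prop :=
  (∀ ⦃X Y : SimplicialObject C⦄ (f : X ⟶ Y), levelWE M f → N.W f) ∧
  (∀ ⦃X Y : SimplicialObject C⦄ (f : X ⟶ Y), N.Cof f ↔ ReedyCofibration M f) ∧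
  (∀ X : SimplicialObject C, N.Fibrant X ↔
    (HomotopicallyConstant M X ∧ ReedyFibrantObj M X))

end Canonical

section Helpers
open CategoryTheory Limits Simplicial Opposite

variable {D : Type u} [Category.{v} D]

namespace ModelStructure

lemma w_id (M : ModelStructure D) (X : D) : M.W (𝟙 X) :=
  M.w_of_isos _ inferInstance

/-- Retract argument: a map with the right lifting property against all
trivial cofibrations is a fibration. -/
lemma fib_of_rlp (M : ModelStructure D) {E B : D} (p : E ⟶ B)
    (h : ∀ {A A' : D} (i : A ⟶ A'), M.Cof i → M.W i → HasLiftingProperty i p) :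
    M.Fib p := by
  obtain ⟨Z, j, q, hj, hjw, hq, hfac⟩ := M.fact_trivCof_fib p
  haveI := h j hj hjw
  have sq : CommSq (𝟙 E) j p q := ⟨by simpa using hfac.symm⟩
  exact M.fib_retract p q
    ⟨j, sq.lift, 𝟙 _, 𝟙 _, sq.fac_left, Category.id_comp _,
      by rw [hfac, Category.comp_id],
      by rw [Category.comp_id, sq.fac_right]⟩ hq

/-- Retract argument: a map with the right lifting property against all
cofibrations is a trivial fibration (here we only extract the weak
equivalence part). -/
lemma w_of_rlp_cof (M : ModelStructure D) {E B : D} (p : E ⟶ B)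
    (h : ∀ {A A' : D} (i : A ⟶ A'), M.Cof i → HasLiftingProperty i p) :
    M.W p := by
  obtain ⟨Z, j, q, hj, hq, hqw, hfac⟩ := M.fact_cof_trivFib p
  haveI := h j hj
  have sq : CommSq (𝟙 E) j p q := ⟨by simpa using hfac.symm⟩
  exact M.w_retract p q
    ⟨j, sq.lift, 𝟙 _, 𝟙 _, sq.fac_left, Category.id_comp _,
      by rw [hfac, Category.comp_id],
      by rw [Category.comp_id, sq.fac_right]⟩ hqw

/-- Every isomorphism is a cofibration. -/
lemma cof_of_isIso (M : ModelStructure D) {A B : D} (f : A ⟶ B) (hf : IsIso f) :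
    M.Cof f := by
  haveI := hf
  obtain ⟨Z, i, q, hi, hq, hqw, hfac⟩ := M.fact_cof_trivFib f
  have sq : CommSq i f q (𝟙 B) := ⟨by rw [hfac, Category.comp_id]⟩
  exact M.cof_retract f i
    ⟨𝟙 _, 𝟙 _, sq.lift, q, Category.id_comp _, sq.fac_right,
      by rw [Category.id_comp, sq.fac_left],
      by rw [hfac, Category.id_comp]⟩ hi

/-- Precomposition of a cofibration with an isomorphism is a cofibration. -/
lemma cof_isIso_comp (M : ModelStructure D) {A A' B : D} (e : A ⟶ A') (i : A' ⟶ B)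
    (he : IsIso e) (hi : M.Cof i) : M.Cof (e ≫ i) := by
  haveI := he
  exact M.cof_retract _ i
    ⟨e, inv e, 𝟙 _, 𝟙 _, by simp, by simp, by simp, by simp⟩ hi

/-- Fibrations are closed under composition. -/
lemma fib_comp (M : ModelStructure D) {A B E : D} (p : A ⟶ B) (q : B ⟶ E)
    (hp : M.Fib p) (hq : M.Fib q) : M.Fib (p ≫ q) := by
  apply M.fib_of_rlp
  intro _ _ i hc hw
  haveI := M.lift_triv_cof i p hc hw hp
  haveI := M.lift_triv_cof i q hc hw hq
  infer_instance

/-- Fibrations are closed under pullback. -/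
lemma fib_of_isPullback (M : ModelStructure D) {P X Y Z : D}
    {a : P ⟶ X} {b : P ⟶ Y} {f : X ⟶ Z} {g : Y ⟶ Z}
    (hpb : IsPullback a b f g) (hg : M.Fib g) : M.Fib a := by
  apply M.fib_of_rlp
  intro A A' i hc hw
  haveI := M.lift_triv_cof i g hc hw hg
  constructor
  intro u v sq
  have sq2 : CommSq (u ≫ b) i g (v ≫ f) := ⟨by
    rw [Category.assoc, ← hpb.w, ← Category.assoc, sq.w, Category.assoc]⟩
  refine ⟨⟨⟨hpb.lift v sq2.lift (by rw [sq2.fac_right]), ?_, ?_⟩⟩⟩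
  · apply hpb.hom_ext
    · rw [Category.assoc, hpb.lift_fst, ← sq.w]
    · rw [Category.assoc, hpb.lift_snd, sq2.fac_left]
  · rw [hpb.lift_fst]

end ModelStructure

end Helpers

section SimpHelpers
open CategoryTheory Limits Simplicial Opposite SimplexCategory

variable {C : Type u} [Category.{v} C] [HasLimitsOfSize.{0,0} C] [HasColimitsOfSize.{0,0} C]

lemma toZero_unique {x : SimplexCategory} (f g : x ⟶ ⦋0⦌) : f = g := by
  rw [SimplexCategory.eq_const_to_zero f, SimplexCategory.eq_const_to_zero g]

instance : IsEmpty (LatchingCat 0) :=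
  ⟨fun u => Nat.not_lt_zero _ u.property.1⟩

/-- The latching object in degree `0` is initial: any two maps out of it agree. -/
lemma latchingObject_zero_hom_ext {X : SimplicialObject C} {W : C}
    (f g : latchingObject 0 X ⟶ W) : f = g :=
  colimit.hom_ext (fun u => (IsEmpty.false u).elim)

/-- A map out of the degree-`0` latching object. -/
noncomputable def latchingObjectZeroTo (X : SimplicialObject C) (W : C) :
    latchingObject 0 X ⟶ W :=
  colimit.desc _
    { pt := W
      ι := { app := fun u => (IsEmpty.false u).elim
             naturality := fun u => (IsEmpty.false u).elim } }

lemma isIso_latchingObjMap_zero {X Y : SimplicialObject C} (f : X ⟶ Y) :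
    IsIso (latchingObjMap 0 f) :=
  ⟨latchingObjectZeroTo Y _, latchingObject_zero_hom_ext _ _,
    latchingObject_zero_hom_ext _ _⟩

/-- For `n ≥ 1` the latching category of `⦋n⦌` has an initial-like object,
given by the unique surjection `⦋n⦌ ↠ ⦋0⦌`. -/
def latchI (n : ℕ) (hn : 0 < n) : LatchingCat n := by
  haveI : Epi (SimplexCategory.const ⦋n⦌ ⦋0⦌ 0) := by
    rw [SimplexCategory.epi_iff_surjective]
    exact fun b => ⟨0, Subsingleton.elim (α := Fin 1) _ _⟩
  refine ⟨Over.mk ((SimplexCategory.const ⦋n⦌ ⦋0⦌ 0).op), ?_, ?_⟩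
  · simpa using hn
  · show Mono ((SimplexCategory.const ⦋n⦌ ⦋0⦌ 0).op)
    infer_instance

/-- Every object of the latching category receives a map from `latchI`. -/
def latchIHom (n : ℕ) (hn : 0 < n) (u : LatchingCat n) : latchI n hn ⟶ u := by
  refine ObjectProperty.homMk (Over.homMk ((SimplexCategory.const u.obj.left.unop ⦋0⦌ 0).op) ?_)
  exact Quiver.Hom.unop_inj (toZero_unique _ _)

lemma isIso_latchingMap_const (A : C) (n : ℕ) (hn : 0 < n) :
    IsIso (latchingMap n ((constSimp C).obj A)) := by
  refine ⟨colimit.ι (latchingDiagram n ((constSimp C).obj A)) (latchI n hn), ?_, ?_⟩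
  · apply colimit.hom_ext
    intro u
    have h2 : colimit.ι (latchingDiagram n ((constSimp C).obj A)) u ≫
        latchingMap n ((constSimp C).obj A) = 𝟙 A := colimit.ι_desc _ _
    have h3 := colimit.w (latchingDiagram n ((constSimp C).obj A)) (latchIHom n hn u)
    have h4 : (latchingDiagram n ((constSimp C).obj A)).map (latchIHom n hn u) = 𝟙 A := rfl
    have h5 : (𝟙 A : A ⟶ A) ≫ colimit.ι (latchingDiagram n ((constSimp C).obj A)) u =
        colimit.ι (latchingDiagram n ((constSimp C).obj A)) u := Category.id_comp _
    rw [h4] at h3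
    replace h3 := h5.symm.trans h3
    have h6 : (𝟙 A : A ⟶ A) ≫
        colimit.ι (latchingDiagram n ((constSimp C).obj A)) (latchI n hn) =
        colimit.ι (latchingDiagram n ((constSimp C).obj A)) (latchI n hn) := Category.id_comp _
    refine (Category.assoc _ _ _).symm.trans ?_
    refine (congrArg (fun t => t ≫ colimit.ι (latchingDiagram n ((constSimp C).obj A)) (latchI n hn)) h2).trans ?_
    refine h6.trans (h3.symm.trans ?_)
    exact (Category.comp_id _).symm
  · exact colimit.ι_desc _ _

/-- The constant simplicial functor takes cofibrations to Reedy cofibrations. -/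
lemma constSimp_reedyCof (M : ModelStructure C) {A B : C} (i : A ⟶ B)
    (hi : M.Cof i) : ReedyCofibration M ((constSimp C).map i) := by
  intro n
  cases n with
  | zero =>
    haveI := isIso_latchingObjMap_zero ((constSimp C).map i)
    have fac : relLatchingMap 0 ((constSimp C).map i) =
        inv (pushout.inl _ _) ≫ (((constSimp C).map i).app (op ⦋0⦌)) := by
      rw [IsIso.eq_inv_comp]
      exact pushout.inl_desc _ _ _
    rw [fac]
    exact M.cof_isIso_comp _ _ inferInstance hi
  | succ n =>
    haveI := isIso_latchingMap_const A (n + 1) (Nat.succ_pos n)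
    haveI := isIso_latchingMap_const B (n + 1) (Nat.succ_pos n)
    have fac : relLatchingMap (n + 1) ((constSimp C).map i) =
        inv (pushout.inr _ _) ≫ latchingMap (n + 1) ((constSimp C).obj B) := by
      rw [IsIso.eq_inv_comp]
      exact pushout.inr_desc _ _ _
    apply M.cof_of_isIso
    rw [fac]
    infer_instance

/-- Lift a map `A ⟶ Z₀` to a map of simplicial objects `cA ⟶ Z`. -/
def constLift {A : C} {Z : SimplicialObject C} (a : A ⟶ Z.obj (op ⦋0⦌)) :
    (constSimp C).obj A ⟶ Z where
  app Δ := a ≫ Z.map (SimplexCategory.const Δ.unop ⦋0⦌ 0).op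
  naturality Δ Δ' θ := by
    dsimp
    rw [Category.id_comp, Category.assoc, ← Z.map_comp]
    congr 1
    all_goals exact Quiver.Hom.unop_inj (toZero_unique _ _)

lemma constLift_app_zero {A : C} {Z : SimplicialObject C} (a : A ⟶ Z.obj (op ⦋0⦌)) :
    (constLift a).app (op ⦋0⦌) = a := by
  dsimp [constLift]
  have h : (SimplexCategory.const (⦋0⦌ : SimplexCategory) ⦋0⦌ 0) = 𝟙 _ :=
    toZero_unique _ _
  rw [h, op_id, Z.map_id, Category.comp_id]

/-- The zeroth component of a trivial fibration (in a model structure on `sC`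
whose cofibrations contain the images of cofibrations under the constant
functor) has the right lifting property against cofibrations of `C`. -/
lemma hasLifting_app_zero (M : ModelStructure C) (N : ModelStructure (SimplicialObject C))
    (hcof : ∀ ⦃U V : SimplicialObject C⦄ (g : U ⟶ V), ReedyCofibration M g → N.Cof g)
    {Z X' : SimplicialObject C} (p : Z ⟶ X') (hp : N.Fib p) (hpw : N.W p)
    {A B : C} (i : A ⟶ B) (hi : M.Cof i) :
    HasLiftingProperty i (p.app (op ⦋0⦌)) := by
  haveI : HasLiftingProperty ((constSimp C).map i) p :=
    N.lift_triv_fib _ p (hcof _ (constSimp_reedyCof M i hi)) hp hpw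
  constructor
  intro a b sq
  have sqs : CommSq (constLift a) ((constSimp C).map i) p (constLift b) := by
    constructor
    ext Δ
    dsimp [constLift]
    rw [Category.assoc, p.naturality, ← Category.assoc, sq.w, Category.assoc]
  refine ⟨⟨⟨sqs.lift.app (op ⦋0⦌), ?_, ?_⟩⟩⟩
  · have h := congrArg (fun t : (constSimp C).obj A ⟶ Z => t.app (op ⦋0⦌)) sqs.fac_left
    simp only [NatTrans.comp_app] at h
    rw [constLift_app_zero] at h
    exact h
  · have h := congrArg (fun t : (constSimp C).obj B ⟶ X' => t.app (op ⦋0⦌)) sqs.fac_right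
    simp only [NatTrans.comp_app] at h
    rw [constLift_app_zero] at h
    exact h

/-- If a map between homotopically constant objects is a weak equivalence in
degree `0`, it is a level weak equivalence. -/
lemma levelWE_of_app_zero (M : ModelStructure C) {X Y : SimplicialObject C}
    (f : X ⟶ Y) (hX : HomotopicallyConstant M X) (hY : HomotopicallyConstant M Y)
    (h0 : M.W (f.app (op ⦋0⦌))) : levelWE M f := by
  have key : ∀ n : ℕ, M.W (f.app (op ⦋n⦌)) := by
    intro n
    induction n with
    | zero => exact h0
    | succ n ih =>
      have nat : X.σ (0 : Fin (n + 1)) ≫ f.app (op ⦋n + 1⦌) =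
          f.app (op ⦋n⦌) ≫ Y.σ (0 : Fin (n + 1)) :=
        f.naturality (SimplexCategory.σ (0 : Fin (n + 1))).op
      have w1 : M.W (f.app (op ⦋n⦌) ≫ Y.σ (0 : Fin (n + 1))) :=
        M.w_comp _ _ ih (hY.2 n 0)
      rw [← nat] at w1
      exact M.w_cancel_left _ _ (hX.2 n 0) w1
  intro Δ
  have hΔ : Δ = op (SimplexCategory.mk Δ.unop.len) :=
    ((congrArg op (SimplexCategory.mk_len Δ.unop)).trans (op_unop Δ)).symm
  rw [hΔ]
  exact key Δ.unop.len

end SimpHelpers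

open CategoryTheory Limits Simplicial Opposite in
/-- In the canonical model structure on `sC`, a map between fibrant objects is a
weak equivalence if and only if it is a level weak equivalence. -/
theorem canonical_we_between_fibrant_iff_level {C : Type u} [Category.{v} C]
    [HasLimitsOfSize.{0,0} C] [HasColimitsOfSize.{0,0} C]
    (M : ModelStructure C) (N : ModelStructure (SimplicialObject C))
    (hN : IsCanonical M N) {X Y : SimplicialObject C} (f : X ⟶ Y)
    (hX : N.Fibrant X) (hY : N.Fibrant Y) :
    N.W f ↔ levelWE M f := by
  constructor
  · intro hf
    -- binary products exist in `sC`
    haveI : HasBinaryProduct X Y := inferInstance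
    -- Ken Brown factorization: factor `(𝟙 X, f) : X ⟶ X ⨯ Y`
    obtain ⟨Z, j, q, hjcof, hjw, hqfib, hfac⟩ :=
      N.fact_trivCof_fib (prod.lift (𝟙 X) f)
    set q₁ : Z ⟶ X := q ≫ prod.fst with hq₁
    set q₂ : Z ⟶ Y := q ≫ prod.snd with hq₂
    have hjq₁ : j ≫ q₁ = 𝟙 X := by
      rw [hq₁, ← Category.assoc, hfac, prod.lift_fst]
    have hjq₂ : j ≫ q₂ = f := by
      rw [hq₂, ← Category.assoc, hfac, prod.lift_snd]
    -- the projections are fibrations since `X` and `Y` are fibrant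
    have hpb := IsPullback.of_hasBinaryProduct' (C := SimplicialObject C) X Y
    have hfst : N.Fib (prod.fst : X ⨯ Y ⟶ X) := N.fib_of_isPullback hpb hY
    have hsnd : N.Fib (prod.snd : X ⨯ Y ⟶ Y) := N.fib_of_isPullback hpb.flip hX
    have hq₁fib : N.Fib q₁ := N.fib_comp _ _ hqfib hfst
    have hq₂fib : N.Fib q₂ := N.fib_comp _ _ hqfib hsnd
    have hq₁w : N.W q₁ := N.w_cancel_left j q₁ hjw (by rw [hjq₁]; exact N.w_id X)
    have hq₂w : N.W q₂ := N.w_cancel_left j q₂ hjw (by rw [hjq₂]; exact hf)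
    -- the zeroth components of `q₁` and `q₂` are weak equivalences in `C`
    have hq₁0 : M.W (q₁.app (op ⦋0⦌)) :=
      M.w_of_rlp_cof _ (fun i hi => hasLifting_app_zero M N
        (fun _ _ g hg => (hN.2.1 g).mpr hg) q₁ hq₁fib hq₁w i hi)
    have hq₂0 : M.W (q₂.app (op ⦋0⦌)) :=
      M.w_of_rlp_cof _ (fun i hi => hasLifting_app_zero M N
        (fun _ _ g hg => (hN.2.1 g).mpr hg) q₂ hq₂fib hq₂w i hi)
    -- hence so are those of `j` and `f`
    have hj0 : M.W (j.app (op ⦋0⦌)) := by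
      refine M.w_cancel_right (j.app (op ⦋0⦌)) (q₁.app (op ⦋0⦌)) hq₁0 ?_
      have : j.app (op ⦋0⦌) ≫ q₁.app (op ⦋0⦌) = 𝟙 _ := by
        rw [← NatTrans.comp_app, hjq₁]; rfl
      rw [this]
      exact M.w_id _
    have hf0 : M.W (f.app (op ⦋0⦌)) := by
      have : f.app (op ⦋0⦌) = j.app (op ⦋0⦌) ≫ q₂.app (op ⦋0⦌) := by
        rw [← NatTrans.comp_app, hjq₂]
      rw [this]
      exact M.w_comp _ _ hj0 hq₂0
    -- propagate along homotopical constancy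
    exact levelWE_of_app_zero M f ((hN.2.2 X).mp hX).1 ((hN.2.2 Y).mp hY).1 hf0
  · exact hN.1 f
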